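/- Under the fixed-design ridge regression setup, the function τ ↦ E[G(τ)] on (0,∞) attains its global minimum at τ = σ_ξ²/σ_π², and the function τ ↦ E[T(τ)] on (0,∞) attains its global minimum uniquely at τ = σ_ξ²/σ_π². -/

import Mathlib

open MeasureTheory ProbabilityTheory Filter Matrix Topology
open scoped NNReal ENNReal

noncomputable section

/-- The ridge hat matrix `P_τ = X (XᵀX + τ I)⁻¹ Xᵀ`. -/
def ridgeHat {n q : ℕ} (X : Matrix (Fin n) (Fin q) ℝ) (τ : ℝ) :
    Matrix (Fin n) (Fin n) ℝ :=
  X * (Xᵀ * X + τ • 1)⁻¹ * Xᵀ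

/-- The GCV criterion `G(τ) = ‖(I − P_τ)Y‖² / (n − tr P_τ)²` at the sample `Y`. -/
def gcv {n q : ℕ} (X : Matrix (Fin n) (Fin q) ℝ) (τ : ℝ) (Y : Fin n → ℝ) : ℝ :=
  (∑ i, (((1 - ridgeHat X τ) *ᵥ Y) i) ^ 2) / ((n : ℝ) - Matrix.trace (ridgeHat X τ)) ^ 2

/-- The prediction risk `T(τ) = ‖Z − P_τ Y‖²`. -/
def predRisk {n q : ℕ} (X : Matrix (Fin n) (Fin q) ℝ) (τ : ℝ) (Z Y : Fin n → ℝ) : ℝ :=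
  ∑ i, ((Z - ridgeHat X τ *ᵥ Y) i) ^ 2

/-- Under the fixed-design ridge regression setup, the function `τ ↦ E[G(τ)]` on `(0,∞)`
attains its global minimum at `τ* = σ_ξ²/σ_π²`, and the function `τ ↦ E[T(τ)]` on `(0,∞)`
attains its global minimum uniquely at `τ* = σ_ξ²/σ_π²`. Here `Z = Xπ` and `Y = Xπ + ξ`. -/


lemma my_integral_x_exp {b : ℝ} (hb : 0 < b) : ∫ x : ℝ, x * Real.exp (-b * x ^ 2) = 0 := by
  have hderiv : ∀ x : ℝ, HasDerivAt (fun x : ℝ => -(2*b)⁻¹ * Real.exp (-b * x ^ 2))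
      (x * Real.exp (-b * x ^ 2)) x := by
    intro x
    have h1 : HasDerivAt (fun x : ℝ => -b * x ^ 2) (-b * (2 * x)) x := by
      simpa using ((hasDerivAt_pow 2 x).const_mul (-b))
    have h2 := (h1.exp).const_mul (-(2*b)⁻¹)
    refine HasDerivAt.congr_deriv h2 ?_
    field_simp
  have hint : Integrable (fun x : ℝ => x * Real.exp (-b * x ^ 2)) :=
    integrable_mul_exp_neg_mul_sq hb
  have hintf : Integrable (fun x : ℝ => -(2*b)⁻¹ * Real.exp (-b * x ^ 2)) :=
    (integrable_exp_neg_mul_sq hb).const_mul _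
  exact integral_eq_zero_of_hasDerivAt_of_integrable hderiv hint hintf

lemma my_integrable_sq_exp {b : ℝ} (hb : 0 < b) :
    Integrable (fun x : ℝ => x ^ 2 * Real.exp (-b * x ^ 2)) := by
  have := integrable_rpow_mul_exp_neg_mul_sq hb (s := 2) (by norm_num)
  have e : ∀ x : ℝ, x ^ (2:ℝ) = x ^ (2:ℕ) := fun x => by
    rw [show ((2:ℝ)) = ((2:ℕ):ℝ) by norm_num, Real.rpow_natCast]
  simpa [e] using this

lemma my_integral_sq_exp {b : ℝ} (hb : 0 < b) :
    ∫ x : ℝ, x ^ 2 * Real.exp (-b * x ^ 2) = Real.sqrt (Real.pi / b) / (2 * b) := by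
  have hderiv : ∀ x : ℝ, HasDerivAt (fun x : ℝ => x * Real.exp (-b * x ^ 2))
      (Real.exp (-b * x ^ 2) - 2 * b * (x ^ 2 * Real.exp (-b * x ^ 2))) x := by
    intro x
    have h1 : HasDerivAt (fun x : ℝ => -b * x ^ 2) (-b * (2 * x)) x := by
      simpa using ((hasDerivAt_pow 2 x).const_mul (-b))
    have h2 := (hasDerivAt_id x).mul h1.exp
    refine HasDerivAt.congr_deriv h2 ?_
    simp only [id_eq]
    ring
  have hint1 : Integrable (fun x : ℝ => Real.exp (-b * x ^ 2)) := integrable_exp_neg_mul_sq hb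
  have hint2 := my_integrable_sq_exp hb
  have h0 := integral_eq_zero_of_hasDerivAt_of_integrable hderiv
    (hint1.sub ((hint2.const_mul (2*b)))) (integrable_mul_exp_neg_mul_sq hb)
  rw [integral_sub hint1 (hint2.const_mul (2*b)), MeasureTheory.integral_const_mul, integral_gaussian] at h0
  have hb' : (2:ℝ) * b ≠ 0 := by positivity
  field_simp at h0 ⊢
  linarith

lemma my_gaussianPDFReal_eq {v : ℝ≥0} (x : ℝ) :
    gaussianPDFReal 0 v x = (Real.sqrt (2 * Real.pi * v))⁻¹ * Real.exp (-(2*(v:ℝ))⁻¹ * x ^ 2) := by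
  unfold gaussianPDFReal
  rw [sub_zero]
  congr 1
  ring

lemma my_gaussianReal_integral {v : ℝ≥0} (hv : v ≠ 0) (g : ℝ → ℝ) :
    ∫ x, g x ∂(gaussianReal 0 v) = ∫ x, gaussianPDFReal 0 v x * g x := by
  rw [gaussianReal_of_var_ne_zero 0 hv]
  have h1 : (gaussianPDF 0 v) = fun x => ((gaussianPDFReal 0 v x).toNNReal : ℝ≥0∞) := rfl
  rw [h1, integral_withDensity_eq_integral_smul (measurable_gaussianPDFReal 0 v).real_toNNReal g]
  congr 1
  funext x
  rw [NNReal.smul_def, smul_eq_mul, Real.coe_toNNReal _ (gaussianPDFReal_nonneg 0 v x)]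

lemma my_gaussianReal_integrable {v : ℝ≥0} (hv : v ≠ 0) {g : ℝ → ℝ}
    (h : Integrable (fun x => gaussianPDFReal 0 v x * g x)) :
    Integrable g (gaussianReal 0 v) := by
  rw [gaussianReal_of_var_ne_zero 0 hv]
  have h1 : (gaussianPDF 0 v) = fun x => ((gaussianPDFReal 0 v x).toNNReal : ℝ≥0∞) := rfl
  rw [h1, integrable_withDensity_iff_integrable_smul (measurable_gaussianPDFReal 0 v).real_toNNReal]
  apply h.congr
  filter_upwards with x
  rw [NNReal.smul_def, smul_eq_mul, Real.coe_toNNReal _ (gaussianPDFReal_nonneg 0 v x)]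

lemma my_b_pos {v : ℝ≥0} (hv : v ≠ 0) : 0 < (2*(v:ℝ))⁻¹ := by
  have : (0:ℝ) < v := by positivity
  positivity

lemma my_gauss_int_id {v : ℝ≥0} (hv : v ≠ 0) : Integrable (fun x : ℝ => x) (gaussianReal 0 v) := by
  apply my_gaussianReal_integrable hv
  have : (fun x : ℝ => gaussianPDFReal 0 v x * x)
      = fun x => (Real.sqrt (2 * Real.pi * v))⁻¹ * (x * Real.exp (-(2*(v:ℝ))⁻¹ * x ^ 2)) := by
    funext x; rw [my_gaussianPDFReal_eq]; ring
  rw [this]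
  exact (integrable_mul_exp_neg_mul_sq (my_b_pos hv)).const_mul _

lemma my_gauss_int_sq {v : ℝ≥0} (hv : v ≠ 0) :
    Integrable (fun x : ℝ => x ^ 2) (gaussianReal 0 v) := by
  apply my_gaussianReal_integrable hv
  have : (fun x : ℝ => gaussianPDFReal 0 v x * x ^ 2)
      = fun x => (Real.sqrt (2 * Real.pi * v))⁻¹ * (x ^ 2 * Real.exp (-(2*(v:ℝ))⁻¹ * x ^ 2)) := by
    funext x; rw [my_gaussianPDFReal_eq]; ring
  rw [this]
  exact (my_integrable_sq_exp (my_b_pos hv)).const_mul _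

lemma my_gauss_mean {v : ℝ≥0} (hv : v ≠ 0) : ∫ x, x ∂(gaussianReal 0 v) = 0 := by
  rw [my_gaussianReal_integral hv]
  have : (fun x : ℝ => gaussianPDFReal 0 v x * x)
      = fun x => (Real.sqrt (2 * Real.pi * v))⁻¹ * (x * Real.exp (-(2*(v:ℝ))⁻¹ * x ^ 2)) := by
    funext x; rw [my_gaussianPDFReal_eq]; ring
  rw [this, MeasureTheory.integral_const_mul, my_integral_x_exp (my_b_pos hv), mul_zero]

lemma my_gauss_var {v : ℝ≥0} (hv : v ≠ 0) : ∫ x, x ^ 2 ∂(gaussianReal 0 v) = v := by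
  rw [my_gaussianReal_integral hv]
  have : (fun x : ℝ => gaussianPDFReal 0 v x * x ^ 2)
      = fun x => (Real.sqrt (2 * Real.pi * v))⁻¹ * (x ^ 2 * Real.exp (-(2*(v:ℝ))⁻¹ * x ^ 2)) := by
    funext x; rw [my_gaussianPDFReal_eq]; ring
  rw [this, MeasureTheory.integral_const_mul, my_integral_sq_exp (my_b_pos hv)]
  have hv' : (0:ℝ) < v := by positivity
  have h1 : Real.pi / ((2*(v:ℝ))⁻¹) = 2 * Real.pi * v := by field_simp
  rw [h1]
  have h2 : (0:ℝ) < 2 * Real.pi * v := by positivity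
  have h3 : Real.sqrt (2 * Real.pi * v) ≠ 0 := by positivity
  field_simp



lemma my_L2_mul {Ω : Type*} [MeasurableSpace Ω] {μ : Measure Ω} {f g : Ω → ℝ}
    (hf : MemLp f 2 μ) (hg : MemLp g 2 μ) : Integrable (fun ω => f ω * g ω) μ := by
  refine Integrable.mono' ((hf.integrable_sq.add hg.integrable_sq).div_const 2)
    (hf.aestronglyMeasurable.mul hg.aestronglyMeasurable) (Filter.Eventually.of_forall fun ω => ?_)
  simp only [Pi.add_apply]
  rw [Real.norm_eq_abs, abs_mul]
  nlinarith [sq_nonneg (|f ω| - |g ω|), sq_abs (f ω), sq_abs (g ω), abs_nonneg (f ω),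
    abs_nonneg (g ω)]

lemma my_second_moment {Ω : Type*} [MeasurableSpace Ω] (P : Measure Ω) [IsProbabilityMeasure P]
    {n q : ℕ} (σpp2 : ℝ) (σxx2 : ℝ≥0) (hσxx : σxx2 ≠ 0)
    (pp : Ω → Fin q → ℝ) (hppmeas : ∀ i, Measurable fun ω => pp ω i)
    (hppindep : iIndepFun (fun i ω => pp ω i) P)
    (hppsq : ∀ i, Integrable (fun ω => (pp ω i) ^ 2) P)
    (hppmean : ∀ i, ∫ ω, pp ω i ∂P = 0)
    (hppvar : ∀ i, ∫ ω, (pp ω i) ^ 2 ∂P = σpp2)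
    (xx : Ω → Fin n → ℝ) (hxxmeas : ∀ i, Measurable fun ω => xx ω i)
    (hxxindep : iIndepFun (fun i ω => xx ω i) P)
    (hxxlaw : ∀ i, Measure.map (fun ω => xx ω i) P = gaussianReal 0 σxx2)
    (hppxx : IndepFun pp xx P)
    (A : Matrix (Fin n) (Fin q) ℝ) (B : Matrix (Fin n) (Fin n) ℝ) :
    ∫ ω, ∑ i, ((A *ᵥ pp ω + B *ᵥ xx ω) i) ^ 2 ∂P
      = σpp2 * (∑ i, ∑ j, A i j ^ 2) + (σxx2:ℝ) * (∑ i, ∑ j, B i j ^ 2) := by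
  -- basic integrability and moments
  have hppL2 : ∀ j, MemLp (fun ω => pp ω j) 2 P := fun j =>
    (memLp_two_iff_integrable_sq (hppmeas j).aestronglyMeasurable).mpr (hppsq j)
  have hxxsq : ∀ i, Integrable (fun ω => (xx ω i) ^ 2) P := by
    intro i
    have h0 : Integrable (fun x : ℝ => x ^ 2) (Measure.map (fun ω => xx ω i) P) := by
      rw [hxxlaw i]; exact my_gauss_int_sq hσxx
    exact (integrable_map_measure ((measurable_id.pow_const 2).aestronglyMeasurable)
      (hxxmeas i).aemeasurable).mp h0
  have hxxL2 : ∀ i, MemLp (fun ω => xx ω i) 2 P := fun i =>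
    (memLp_two_iff_integrable_sq (hxxmeas i).aestronglyMeasurable).mpr (hxxsq i)
  have hxxmean : ∀ i, ∫ ω, xx ω i ∂P = 0 := by
    intro i
    have h0 : ∫ x, x ∂(Measure.map (fun ω => xx ω i) P) = 0 := by
      rw [hxxlaw i]; exact my_gauss_mean hσxx
    rwa [integral_map (μ := P) (φ := fun ω => xx ω i) (f := fun x : ℝ => x) (hxxmeas i).aemeasurable measurable_id.aestronglyMeasurable] at h0
  have hxxvar : ∀ i, ∫ ω, (xx ω i) ^ 2 ∂P = (σxx2 : ℝ) := by
    intro i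
    have h0 : ∫ x, x ^ 2 ∂(Measure.map (fun ω => xx ω i) P) = (σxx2:ℝ) := by
      rw [hxxlaw i]; exact my_gauss_var hσxx
    rwa [integral_map (μ := P) (φ := fun ω => xx ω i) (f := fun x : ℝ => x ^ 2)
      (hxxmeas i).aemeasurable ((measurable_id.pow_const 2).aestronglyMeasurable)] at h0
  have hpppp : ∀ j k, ∫ ω, pp ω j * pp ω k ∂P = if j = k then σpp2 else 0 := by
    intro j k
    by_cases h : j = k
    · subst h
      simp only [if_true, ← sq]
      exact hppvar j
    · rw [if_neg h]
      have h1 := (hppindep.indepFun h).integral_mul_eq_mul_integral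
        ((hppL2 j).integrable one_le_two).aestronglyMeasurable ((hppL2 k).integrable one_le_two).aestronglyMeasurable
      calc ∫ ω, pp ω j * pp ω k ∂P
          = (∫ ω, pp ω j ∂P) * ∫ ω, pp ω k ∂P := h1
        _ = 0 := by rw [hppmean j, zero_mul]
  have hxxxx : ∀ j k, ∫ ω, xx ω j * xx ω k ∂P = if j = k then (σxx2:ℝ) else 0 := by
    intro j k
    by_cases h : j = k
    · subst h
      simp only [if_true, ← sq]
      exact hxxvar j
    · rw [if_neg h]
      have h1 := (hxxindep.indepFun h).integral_mul_eq_mul_integral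
        ((hxxL2 j).integrable one_le_two).aestronglyMeasurable ((hxxL2 k).integrable one_le_two).aestronglyMeasurable
      calc ∫ ω, xx ω j * xx ω k ∂P
          = (∫ ω, xx ω j ∂P) * ∫ ω, xx ω k ∂P := h1
        _ = 0 := by rw [hxxmean j, zero_mul]
  have hppxxmom : ∀ j k, ∫ ω, pp ω j * xx ω k ∂P = 0 := by
    intro j k
    have hind : IndepFun (fun ω => pp ω j) (fun ω => xx ω k) P :=
      hppxx.comp (measurable_pi_apply j) (measurable_pi_apply k)
    have h1 := hind.integral_mul_eq_mul_integral
      ((hppL2 j).integrable one_le_two).aestronglyMeasurable ((hxxL2 k).integrable one_le_two).aestronglyMeasurable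
    calc ∫ ω, pp ω j * xx ω k ∂P
        = (∫ ω, pp ω j ∂P) * ∫ ω, xx ω k ∂P := h1
      _ = 0 := by rw [hppmean j, zero_mul]
  -- the key scalar computation
  have key : ∀ (a : Fin q → ℝ) (b : Fin n → ℝ),
      (∫ ω, ((∑ j, a j * pp ω j) + (∑ k, b k * xx ω k)) ^ 2 ∂P
        = σpp2 * (∑ j, a j ^ 2) + (σxx2:ℝ) * (∑ k, b k ^ 2)) ∧
      Integrable (fun ω => ((∑ j, a j * pp ω j) + (∑ k, b k * xx ω k)) ^ 2) P := by
    intro a b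
    have huL2 : MemLp (fun ω => ∑ j, a j * pp ω j) 2 P :=
      memLp_finset_sum _ (fun j _ => (hppL2 j).const_mul (a j))
    have hvL2 : MemLp (fun ω => ∑ k, b k * xx ω k) 2 P :=
      memLp_finset_sum _ (fun k _ => (hxxL2 k).const_mul (b k))
    have hsum : MemLp (fun ω => (∑ j, a j * pp ω j) + (∑ k, b k * xx ω k)) 2 P := huL2.add hvL2
    refine ⟨?_, hsum.integrable_sq⟩
    have husq : ∫ ω, (∑ j, a j * pp ω j) ^ 2 ∂P = σpp2 * ∑ j, a j ^ 2 := by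
      have e1 : ∀ ω : Ω, (∑ j, a j * pp ω j) ^ 2
          = ∑ j, ∑ k, (a j * a k) * (pp ω j * pp ω k) := by
        intro ω
        rw [sq, Finset.sum_mul_sum]
        exact Finset.sum_congr rfl fun j _ => Finset.sum_congr rfl fun k _ => by ring
      have hint : ∀ (j k : Fin q), Integrable (fun ω => (a j * a k) * (pp ω j * pp ω k)) P :=
        fun j k => (my_L2_mul (hppL2 j) (hppL2 k)).const_mul _
      calc ∫ ω, (∑ j, a j * pp ω j) ^ 2 ∂P
          = ∫ ω, ∑ j, ∑ k, (a j * a k) * (pp ω j * pp ω k) ∂P := by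
            exact integral_congr_ae (Filter.Eventually.of_forall fun ω => e1 ω)
        _ = ∑ j, ∑ k, (a j * a k) * ∫ ω, pp ω j * pp ω k ∂P := by
            rw [integral_finset_sum _ (fun j _ => integrable_finset_sum _ (fun k _ => hint j k))]
            exact Finset.sum_congr rfl fun j _ => by
              rw [integral_finset_sum _ (fun k _ => hint j k)]
              exact Finset.sum_congr rfl fun k _ => integral_const_mul _ _
        _ = σpp2 * ∑ j, a j ^ 2 := by
            rw [Finset.mul_sum]
            refine Finset.sum_congr rfl fun j _ => ?_
            rw [Finset.sum_eq_single j]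
            · rw [hpppp j j, if_pos rfl]; ring
            · intro k _ hk; rw [hpppp j k, if_neg (Ne.symm hk), mul_zero]
            · intro h; exact absurd (Finset.mem_univ j) h
      done
    have hvsq : ∫ ω, (∑ k, b k * xx ω k) ^ 2 ∂P = (σxx2:ℝ) * ∑ k, b k ^ 2 := by
      have e1 : ∀ ω : Ω, (∑ j, b j * xx ω j) ^ 2
          = ∑ j, ∑ k, (b j * b k) * (xx ω j * xx ω k) := by
        intro ω
        rw [sq, Finset.sum_mul_sum]
        exact Finset.sum_congr rfl fun j _ => Finset.sum_congr rfl fun k _ => by ring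
      have hint : ∀ (j k : Fin n), Integrable (fun ω => (b j * b k) * (xx ω j * xx ω k)) P :=
        fun j k => (my_L2_mul (hxxL2 j) (hxxL2 k)).const_mul _
      calc ∫ ω, (∑ j, b j * xx ω j) ^ 2 ∂P
          = ∫ ω, ∑ j, ∑ k, (b j * b k) * (xx ω j * xx ω k) ∂P := by
            exact integral_congr_ae (Filter.Eventually.of_forall fun ω => e1 ω)
        _ = ∑ j, ∑ k, (b j * b k) * ∫ ω, xx ω j * xx ω k ∂P := by
            rw [integral_finset_sum _ (fun j _ => integrable_finset_sum _ (fun k _ => hint j k))]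
            exact Finset.sum_congr rfl fun j _ => by
              rw [integral_finset_sum _ (fun k _ => hint j k)]
              exact Finset.sum_congr rfl fun k _ => integral_const_mul _ _
        _ = (σxx2:ℝ) * ∑ j, b j ^ 2 := by
            rw [Finset.mul_sum]
            refine Finset.sum_congr rfl fun j _ => ?_
            rw [Finset.sum_eq_single j]
            · rw [hxxxx j j, if_pos rfl]; ring
            · intro k _ hk; rw [hxxxx j k, if_neg (Ne.symm hk), mul_zero]
            · intro h; exact absurd (Finset.mem_univ j) h
    have huv : ∫ ω, (∑ j, a j * pp ω j) * (∑ k, b k * xx ω k) ∂P = 0 := by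
      have e1 : ∀ ω : Ω, (∑ j, a j * pp ω j) * (∑ k, b k * xx ω k)
          = ∑ j, ∑ k, (a j * b k) * (pp ω j * xx ω k) := by
        intro ω
        rw [Finset.sum_mul_sum]
        exact Finset.sum_congr rfl fun j _ => Finset.sum_congr rfl fun k _ => by ring
      have hint : ∀ (j : Fin q) (k : Fin n),
          Integrable (fun ω => (a j * b k) * (pp ω j * xx ω k)) P :=
        fun j k => (my_L2_mul (hppL2 j) (hxxL2 k)).const_mul _
      calc ∫ ω, (∑ j, a j * pp ω j) * (∑ k, b k * xx ω k) ∂P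
          = ∫ ω, ∑ j, ∑ k, (a j * b k) * (pp ω j * xx ω k) ∂P := by
            exact integral_congr_ae (Filter.Eventually.of_forall fun ω => e1 ω)
        _ = ∑ j, ∑ k, (a j * b k) * ∫ ω, pp ω j * xx ω k ∂P := by
            rw [integral_finset_sum _ (fun j _ => integrable_finset_sum _ (fun k _ => hint j k))]
            exact Finset.sum_congr rfl fun j _ => by
              rw [integral_finset_sum _ (fun k _ => hint j k)]
              exact Finset.sum_congr rfl fun k _ => integral_const_mul _ _
        _ = 0 := by
            refine Finset.sum_eq_zero fun j _ => Finset.sum_eq_zero fun k _ => ?_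
            rw [hppxxmom j k, mul_zero]
    have e2 : ∀ ω : Ω, ((∑ j, a j * pp ω j) + (∑ k, b k * xx ω k)) ^ 2
        = (∑ j, a j * pp ω j) ^ 2 + (2 * ((∑ j, a j * pp ω j) * (∑ k, b k * xx ω k))
          + (∑ k, b k * xx ω k) ^ 2) := fun ω => by ring
    have i1 : Integrable (fun ω => (∑ j, a j * pp ω j) ^ 2) P := huL2.integrable_sq
    have i2 : Integrable (fun ω => (∑ j, a j * pp ω j) * (∑ k, b k * xx ω k)) P :=
      my_L2_mul huL2 hvL2
    have i3 : Integrable (fun ω => (∑ k, b k * xx ω k) ^ 2) P := hvL2.integrable_sq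
    calc ∫ ω, ((∑ j, a j * pp ω j) + (∑ k, b k * xx ω k)) ^ 2 ∂P
        = ∫ ω, ((∑ j, a j * pp ω j) ^ 2 + (2 * ((∑ j, a j * pp ω j) * (∑ k, b k * xx ω k))
            + (∑ k, b k * xx ω k) ^ 2)) ∂P :=
          integral_congr_ae (Filter.Eventually.of_forall fun ω => e2 ω)
      _ = (∫ ω, (∑ j, a j * pp ω j) ^ 2 ∂P)
          + ((∫ ω, 2 * ((∑ j, a j * pp ω j) * (∑ k, b k * xx ω k)) ∂P)
            + ∫ ω, (∑ k, b k * xx ω k) ^ 2 ∂P) := by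
          have i23 : Integrable (fun ω => 2 * ((∑ j, a j * pp ω j) * (∑ k, b k * xx ω k))
              + (∑ k, b k * xx ω k) ^ 2) P := (i2.const_mul 2).add i3
          rw [integral_add i1 i23, integral_add (i2.const_mul 2) i3]
      _ = σpp2 * (∑ j, a j ^ 2) + (σxx2:ℝ) * (∑ k, b k ^ 2) := by
          rw [husq, hvsq, integral_const_mul, huv]
          ring
  -- assemble
  have happly : ∀ (ω : Ω) (i : Fin n), (A *ᵥ pp ω + B *ᵥ xx ω) i
      = (∑ j, A i j * pp ω j) + (∑ k, B i k * xx ω k) := by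
    intro ω i
    simp [Matrix.mulVec, dotProduct]
  calc ∫ ω, ∑ i, ((A *ᵥ pp ω + B *ᵥ xx ω) i) ^ 2 ∂P
      = ∫ ω, ∑ i, ((∑ j, A i j * pp ω j) + (∑ k, B i k * xx ω k)) ^ 2 ∂P := by
        refine integral_congr_ae (Filter.Eventually.of_forall fun ω => ?_)
        exact Finset.sum_congr rfl fun i _ => by rw [happly ω i]
    _ = ∑ i, ∫ ω, ((∑ j, A i j * pp ω j) + (∑ k, B i k * xx ω k)) ^ 2 ∂P :=
        integral_finset_sum _ (fun i _ => (key (fun j => A i j) (fun k => B i k)).2)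
    _ = ∑ i, (σpp2 * (∑ j, A i j ^ 2) + (σxx2:ℝ) * (∑ j, B i j ^ 2)) :=
        Finset.sum_congr rfl fun i _ => (key (fun j => A i j) (fun k => B i k)).1
    _ = σpp2 * (∑ i, ∑ j, A i j ^ 2) + (σxx2:ℝ) * (∑ i, ∑ j, B i j ^ 2) := by
        rw [Finset.sum_add_distrib, ← Finset.mul_sum, ← Finset.mul_sum]


lemma my_scalar_T {n : ℕ} (d : Fin n → ℝ) (hd : ∀ i, 0 ≤ d i)
    (hdpos : ∃ i, 0 < d i) (σ : ℝ) (hσ : 0 < σ) {τ τs : ℝ} (hτ : 0 < τ) (hτs : 0 < τs) :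
    (σ * ∑ i, d i * (τs * (d i + τs)⁻¹) ^ 2 + (σ * τs) * ∑ i, (d i * (d i + τs)⁻¹) ^ 2
      ≤ σ * ∑ i, d i * (τ * (d i + τ)⁻¹) ^ 2 + (σ * τs) * ∑ i, (d i * (d i + τ)⁻¹) ^ 2)
    ∧ (σ * ∑ i, d i * (τ * (d i + τ)⁻¹) ^ 2 + (σ * τs) * ∑ i, (d i * (d i + τ)⁻¹) ^ 2 =
       σ * ∑ i, d i * (τs * (d i + τs)⁻¹) ^ 2 + (σ * τs) * ∑ i, (d i * (d i + τs)⁻¹) ^ 2 → τ = τs) := by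
  have hdτ : ∀ i, 0 < d i + τ := fun i => by have := hd i; positivity
  have hdτs : ∀ i, 0 < d i + τs := fun i => by have := hd i; positivity
  -- pointwise identity
  have hpt : ∀ i, σ * (d i * (τ * (d i + τ)⁻¹) ^ 2) + (σ * τs) * (d i * (d i + τ)⁻¹) ^ 2
      = (σ * (d i * (τs * (d i + τs)⁻¹) ^ 2) + (σ * τs) * (d i * (d i + τs)⁻¹) ^ 2)
        + σ * (d i) ^ 2 * (τ - τs) ^ 2 * ((d i + τ)⁻¹) ^ 2 * (d i + τs)⁻¹ := by
    intro i
    have h1 := (hdτ i).ne'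
    have h2 := (hdτs i).ne'
    field_simp
    ring
  have hkey : σ * ∑ i, d i * (τ * (d i + τ)⁻¹) ^ 2 + (σ * τs) * ∑ i, (d i * (d i + τ)⁻¹) ^ 2
      = (σ * ∑ i, d i * (τs * (d i + τs)⁻¹) ^ 2 + (σ * τs) * ∑ i, (d i * (d i + τs)⁻¹) ^ 2)
        + ∑ i, σ * (d i) ^ 2 * (τ - τs) ^ 2 * ((d i + τ)⁻¹) ^ 2 * (d i + τs)⁻¹ := by
    simp only [Finset.mul_sum, ← Finset.sum_add_distrib]
    exact Finset.sum_congr rfl fun i _ => hpt i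
  have hrem_nonneg : 0 ≤ ∑ i, σ * (d i) ^ 2 * (τ - τs) ^ 2 * ((d i + τ)⁻¹) ^ 2 * (d i + τs)⁻¹ :=
    Finset.sum_nonneg fun i _ => by
      have h1 := (hdτ i).le
      have h2 := (hdτs i).le
      have := hd i
      positivity
  constructor
  · rw [hkey]; linarith
  · intro heq
    rw [hkey] at heq
    have hzero : ∑ i, σ * (d i) ^ 2 * (τ - τs) ^ 2 * ((d i + τ)⁻¹) ^ 2 * (d i + τs)⁻¹ = 0 := by
      linarith
    by_contra hne
    have hts : (τ - τs) ^ 2 > 0 := by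
      have : τ - τs ≠ 0 := sub_ne_zero.mpr hne
      positivity
    obtain ⟨i0, hi0⟩ := hdpos
    have hpos : 0 < ∑ i, σ * (d i) ^ 2 * (τ - τs) ^ 2 * ((d i + τ)⁻¹) ^ 2 * (d i + τs)⁻¹ := by
      refine Finset.sum_pos' (fun i _ => by
        have h1 := (hdτ i).le
        have h2 := (hdτs i).le
        have := hd i
        positivity) ⟨i0, Finset.mem_univ i0, ?_⟩
      have h1 := hdτ i0
      have h2 := hdτs i0
      positivity
    linarith

lemma my_scalar_G {n : ℕ} (hn : 0 < n) (d : Fin n → ℝ) (hd : ∀ i, 0 ≤ d i)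
    (σ : ℝ) (hσ : 0 < σ) {τ τs : ℝ} (hτ : 0 < τ) (hτs : 0 < τs) :
    (σ * ∑ i, d i * (τs * (d i + τs)⁻¹) ^ 2 + (σ * τs) * ∑ i, (τs * (d i + τs)⁻¹) ^ 2)
        / (∑ i, τs * (d i + τs)⁻¹) ^ 2
      ≤ (σ * ∑ i, d i * (τ * (d i + τ)⁻¹) ^ 2 + (σ * τs) * ∑ i, (τ * (d i + τ)⁻¹) ^ 2)
        / (∑ i, τ * (d i + τ)⁻¹) ^ 2 := by
  have hne : (Finset.univ : Finset (Fin n)).Nonempty := ⟨⟨0, hn⟩, Finset.mem_univ _⟩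
  have hdτ : ∀ i, 0 < d i + τ := fun i => by have := hd i; positivity
  have hdτs : ∀ i, 0 < d i + τs := fun i => by have := hd i; positivity
  set S1 : ℝ := ∑ i, (d i + τs) * ((d i + τ)⁻¹) ^ 2 with hS1
  set S2 : ℝ := ∑ i, (d i + τ)⁻¹ with hS2
  set S3 : ℝ := ∑ i, (d i + τs)⁻¹ with hS3
  have hS1pos : 0 < S1 := Finset.sum_pos (fun i _ => by
    have h1 := hdτ i; have h2 := hdτs i; positivity) hne
  have hS2pos : 0 < S2 := Finset.sum_pos (fun i _ => by have := hdτ i; positivity) hne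
  have hS3pos : 0 < S3 := Finset.sum_pos (fun i _ => by have := hdτs i; positivity) hne
  -- numerator/denominator normal forms
  have hnum : ∀ τ' : ℝ, 0 < τ' →
      σ * ∑ i, d i * (τ' * (d i + τ')⁻¹) ^ 2 + (σ * τs) * ∑ i, (τ' * (d i + τ')⁻¹) ^ 2
        = σ * τ' ^ 2 * ∑ i, (d i + τs) * ((d i + τ')⁻¹) ^ 2 := by
    intro τ' hτ'
    simp only [Finset.mul_sum, ← Finset.sum_add_distrib]
    exact Finset.sum_congr rfl fun i _ => by ring
  have hden : ∀ τ' : ℝ, (∑ i, τ' * (d i + τ')⁻¹) ^ 2 = τ' ^ 2 * (∑ i, (d i + τ')⁻¹) ^ 2 := by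
    intro τ'
    rw [← Finset.mul_sum, mul_pow]
  -- Cauchy–Schwarz : S2 ^ 2 ≤ S1 * S3
  have hCS : S2 ^ 2 ≤ S1 * S3 := by
    have h := Finset.sum_mul_sq_le_sq_mul_sq Finset.univ
      (fun i => Real.sqrt (d i + τs) * (d i + τ)⁻¹) (fun i => (Real.sqrt (d i + τs))⁻¹)
    have h1 : ∀ i : Fin n, Real.sqrt (d i + τs) * (d i + τ)⁻¹ * (Real.sqrt (d i + τs))⁻¹
        = (d i + τ)⁻¹ := by
      intro i
      have hs : Real.sqrt (d i + τs) ≠ 0 := by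
        have := hdτs i; positivity
      rw [mul_comm (Real.sqrt (d i + τs)) ((d i + τ)⁻¹), mul_assoc, mul_inv_cancel₀ hs, mul_one]
    have h2 : ∀ i : Fin n, (Real.sqrt (d i + τs) * (d i + τ)⁻¹) ^ 2
        = (d i + τs) * ((d i + τ)⁻¹) ^ 2 := by
      intro i
      rw [mul_pow, Real.sq_sqrt (hdτs i).le]
    have h3 : ∀ i : Fin n, ((Real.sqrt (d i + τs))⁻¹) ^ 2 = (d i + τs)⁻¹ := by
      intro i
      rw [inv_pow, Real.sq_sqrt (hdτs i).le]
    calc S2 ^ 2 = (∑ i, Real.sqrt (d i + τs) * (d i + τ)⁻¹ * (Real.sqrt (d i + τs))⁻¹) ^ 2 := by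
          rw [hS2]; congr 1; exact Finset.sum_congr rfl fun i _ => (h1 i).symm
      _ ≤ (∑ i, (Real.sqrt (d i + τs) * (d i + τ)⁻¹) ^ 2)
          * ∑ i, ((Real.sqrt (d i + τs))⁻¹) ^ 2 := h
      _ = S1 * S3 := by
          rw [hS1, hS3]
          congr 1
          · exact Finset.sum_congr rfl fun i _ => h2 i
          · exact Finset.sum_congr rfl fun i _ => h3 i
  -- finish
  have hS1s : ∑ i, (d i + τs) * ((d i + τs)⁻¹) ^ 2 = S3 := by
    rw [hS3]
    exact Finset.sum_congr rfl fun i _ => by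
      have := (hdτs i).ne'
      field_simp
  rw [hnum τ hτ, hnum τs hτs, hden τ, hden τs, hS1s]
  rw [div_le_div_iff₀ (by positivity) (by positivity)]
  have hfac : 0 < σ * τ ^ 2 * τs ^ 2 * S3 := by positivity
  have := mul_le_mul_of_nonneg_left hCS hfac.le
  nlinarith [this, hS2pos, hS3pos, hS1pos]

-- DET_PLACEHOLDER



lemma my_sum_sq_eq_trace {m k : ℕ} (A : Matrix (Fin m) (Fin k) ℝ) :
    ∑ i, ∑ j, A i j ^ 2 = Matrix.trace (A * Aᵀ) := by
  simp [Matrix.trace, Matrix.diag, Matrix.mul_apply, sq]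

lemma my_dotProduct_self_pos {q : ℕ} {x : Fin q → ℝ} (hx : x ≠ 0) :
    0 < star x ⬝ᵥ x := by
  have hx' : ∃ i, x i ≠ 0 := by
    by_contra h
    push_neg at h
    exact hx (funext fun i => h i)
  obtain ⟨i, hi⟩ := hx'
  unfold dotProduct
  refine Finset.sum_pos' (fun j _ => ?_) ⟨i, Finset.mem_univ i, ?_⟩
  · simp only [Pi.star_apply, star_trivial]
    exact mul_self_nonneg _
  · simp only [Pi.star_apply, star_trivial]
    exact mul_self_pos.mpr hi

lemma my_posdef_add_smul {m q : ℕ} (X : Matrix (Fin m) (Fin q) ℝ) {τ : ℝ} (hτ : 0 < τ) :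
    (Xᵀ * X + τ • 1).PosDef := by
  have h1 : (Xᵀ * X).PosSemidef := by
    have := Matrix.posSemidef_conjTranspose_mul_self X
    rwa [Matrix.conjTranspose_eq_transpose_of_trivial] at this
  refine Matrix.posDef_iff_dotProduct_mulVec.mpr ⟨Matrix.IsHermitian.add h1.1 ?_, fun x hx => ?_⟩
  · show (τ • (1 : Matrix (Fin q) (Fin q) ℝ))ᴴ = _
    rw [Matrix.conjTranspose_smul, Matrix.conjTranspose_one, star_trivial]
  · rw [Matrix.add_mulVec, dotProduct_add, Matrix.smul_mulVec, Matrix.one_mulVec,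
      dotProduct_smul]
    have hA := h1.dotProduct_mulVec_nonneg x
    have hx2 : 0 < star x ⬝ᵥ x := my_dotProduct_self_pos hx
    have : 0 < τ • (star x ⬝ᵥ x) := by
      rw [smul_eq_mul]; positivity
    linarith

lemma my_ridge_diag {n q : ℕ} (X : Matrix (Fin n) (Fin q) ℝ) :
    ∃ d : Fin n → ℝ, (∀ i, 0 ≤ d i) ∧ (∑ i, d i = ∑ i, ∑ j, X i j ^ 2) ∧
      ∀ τ : ℝ, 0 < τ →
        ((n : ℝ) - Matrix.trace (ridgeHat X τ) = ∑ i, τ * (d i + τ)⁻¹) ∧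
        (∑ i, ∑ j, (((1 - ridgeHat X τ) * X : Matrix (Fin n) (Fin q) ℝ)) i j ^ 2
          = ∑ i, d i * (τ * (d i + τ)⁻¹) ^ 2) ∧
        (∑ i, ∑ j, ((1 - ridgeHat X τ : Matrix (Fin n) (Fin n) ℝ)) i j ^ 2
          = ∑ i, (τ * (d i + τ)⁻¹) ^ 2) ∧
        (∑ i, ∑ j, (ridgeHat X τ) i j ^ 2 = ∑ i, (d i * (d i + τ)⁻¹) ^ 2) := by
  classical
  set K := X * Xᵀ with hKdef
  have hK : K.PosSemidef := by
    have := Matrix.posSemidef_self_mul_conjTranspose X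
    rwa [Matrix.conjTranspose_eq_transpose_of_trivial] at this
  have hH : K.IsHermitian := hK.1
  set U : Matrix (Fin n) (Fin n) ℝ := (hH.eigenvectorUnitary : Matrix (Fin n) (Fin n) ℝ) with hUdef
  set d : Fin n → ℝ := hH.eigenvalues with hddef
  have hd : ∀ i, 0 ≤ d i := hK.eigenvalues_nonneg
  have hmem := hH.eigenvectorUnitary.2
  rw [Unitary.mem_iff] at hmem
  have hUU : star U * U = 1 := hmem.1
  have hUU' : U * star U = 1 := hmem.2
  have hspec : K = U * diagonal d * star U := by
    have := hH.spectral_theorem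
    simpa using this
  set C : (Fin n → ℝ) → Matrix (Fin n) (Fin n) ℝ := fun f => U * diagonal f * star U with hCdef
  have hCmul : ∀ f g, C f * C g = C (fun i => f i * g i) := by
    intro f g
    have h : C f * C g = U * diagonal f * (star U * U) * diagonal g * star U := by
      simp only [hCdef, Matrix.mul_assoc]
    rw [h, hUU, Matrix.mul_one, Matrix.mul_assoc U, Matrix.diagonal_mul_diagonal]
  have hCtrace : ∀ f, Matrix.trace (C f) = ∑ i, f i := by
    intro f
    rw [hCdef]
    rw [Matrix.trace_mul_cycle, hUU, Matrix.one_mul, Matrix.trace_diagonal]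
  have hCone : C (fun _ => 1) = 1 := by
    simp only [hCdef]
    rw [show (diagonal (fun _ : Fin n => (1:ℝ))) = 1 from Matrix.diagonal_one, mul_one, hUU']
  have hCsub : ∀ f g, C f - C g = C (fun i => f i - g i) := by
    intro f g
    simp only [hCdef, ← Matrix.diagonal_sub, Matrix.mul_sub, Matrix.sub_mul]
  have hCadd : ∀ f g, C f + C g = C (fun i => f i + g i) := by
    intro f g
    simp only [hCdef, ← Matrix.diagonal_add, Matrix.mul_add, Matrix.add_mul]
  have hsU : star U = Uᵀ := by
    rw [Matrix.star_eq_conjTranspose, Matrix.conjTranspose_eq_transpose_of_trivial]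
  have hCtrans : ∀ f, (C f)ᵀ = C f := by
    intro f
    rw [hCdef]
    simp only [hsU, Matrix.transpose_mul, Matrix.transpose_transpose, Matrix.diagonal_transpose]
    rw [Matrix.mul_assoc]
  have hCK : K = C d := hspec
  -- inverse formula
  have hinv : ∀ τ : ℝ, 0 < τ → (K + τ • 1)⁻¹ = C (fun i => (d i + τ)⁻¹) := by
    intro τ hτ
    have hsm : (τ • 1 : Matrix (Fin n) (Fin n) ℝ) = diagonal (fun _ => τ) := by
      ext i j
      by_cases h : i = j <;> simp [h, Matrix.diagonal_apply, Matrix.one_apply]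
    have hsm2 : (τ • 1 : Matrix (Fin n) (Fin n) ℝ) = C (fun _ => τ) := by
      rw [hsm, hCdef]
      have : diagonal (fun _ : Fin n => τ) = U * diagonal (fun _ : Fin n => τ) * star U := by
        rw [Matrix.mul_assoc]
        rw [show diagonal (fun _ : Fin n => τ) * star U = τ • star U by
          rw [hsm.symm]; rw [Matrix.smul_mul, one_mul]]
        rw [Matrix.mul_smul, hUU', hsm]
      exact this
    have hKτ : K + τ • 1 = C (fun i => d i + τ) := by
      rw [hCK, hsm2, hCadd]
    rw [hKτ]
    apply Matrix.inv_eq_right_inv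
    rw [hCmul]
    have : (fun i => (d i + τ) * (d i + τ)⁻¹) = fun _ : Fin n => (1:ℝ) := by
      funext i
      have : d i + τ ≠ 0 := by have := hd i; positivity
      field_simp
    rw [this, hCone]
  -- ridgeHat formula
  have hP : ∀ τ : ℝ, 0 < τ → ridgeHat X τ = C (fun i => (d i + τ)⁻¹ * d i) := by
    intro τ hτ
    have hS : (Xᵀ * X + τ • 1).PosDef := my_posdef_add_smul X hτ
    have hSdet : IsUnit (Xᵀ * X + τ • 1).det := hS.det_pos.ne'.isUnit
    have hKpd : (K + τ • 1).PosDef := by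
      have := my_posdef_add_smul Xᵀ hτ
      rwa [Matrix.transpose_transpose] at this
    have hKdet : IsUnit (K + τ • 1).det := hKpd.det_pos.ne'.isUnit
    have hXA : (K + τ • 1) * X = X * (Xᵀ * X + τ • 1) := by
      rw [Matrix.add_mul, Matrix.mul_add, Matrix.smul_mul, Matrix.mul_smul, Matrix.one_mul,
        Matrix.mul_one, Matrix.mul_assoc]
    have e1 : X * (Xᵀ * X + τ • 1)⁻¹ = (K + τ • 1)⁻¹ * X := by
      calc X * (Xᵀ * X + τ • 1)⁻¹
          = ((K + τ • 1)⁻¹ * (K + τ • 1)) * X * (Xᵀ * X + τ • 1)⁻¹ := by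
            rw [Matrix.nonsing_inv_mul _ hKdet, Matrix.one_mul]
        _ = (K + τ • 1)⁻¹ * ((K + τ • 1) * X) * (Xᵀ * X + τ • 1)⁻¹ := by
            rw [Matrix.mul_assoc ((K + τ • 1)⁻¹)]
        _ = (K + τ • 1)⁻¹ * (X * (Xᵀ * X + τ • 1)) * (Xᵀ * X + τ • 1)⁻¹ := by
            rw [hXA]
        _ = (K + τ • 1)⁻¹ * X * ((Xᵀ * X + τ • 1) * (Xᵀ * X + τ • 1)⁻¹) := by
            simp only [Matrix.mul_assoc]
        _ = (K + τ • 1)⁻¹ * X := by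
            rw [Matrix.mul_nonsing_inv _ hSdet, Matrix.mul_one]
    have e2 : ridgeHat X τ = (K + τ • 1)⁻¹ * K := by
      rw [ridgeHat, e1, Matrix.mul_assoc, hKdef]
    rw [e2, hinv τ hτ, hCK, hCmul]
  -- conclusion
  refine ⟨d, hd, ?_, ?_⟩
  · have h1 : ∑ i, ∑ j, X i j ^ 2 = Matrix.trace K := by
      rw [my_sum_sq_eq_trace, hKdef]
    rw [h1, hCK, hCtrace]
  intro τ hτ
  have hdτ : ∀ i, d i + τ ≠ 0 := fun i => by have := hd i; positivity
  have h1P : 1 - ridgeHat X τ = C (fun i => τ * (d i + τ)⁻¹) := by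
    have harg : (fun i => (1:ℝ) - (d i + τ)⁻¹ * d i) = fun i => τ * (d i + τ)⁻¹ := by
      funext i
      field_simp [hdτ i]
      ring
    rw [hP τ hτ, ← hCone, hCsub, harg]
  have hFrob : ∀ f : Fin n → ℝ, ∑ i, ∑ j, (C f) i j ^ 2 = ∑ i, f i ^ 2 := by
    intro f
    rw [my_sum_sq_eq_trace, hCtrans, hCmul, hCtrace]
    exact Finset.sum_congr rfl fun i _ => (sq (f i)).symm
  have hFrobX : ∀ f : Fin n → ℝ, ∑ i, ∑ j, ((C f) * X) i j ^ 2 = ∑ i, d i * f i ^ 2 := by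
    intro f
    rw [my_sum_sq_eq_trace, Matrix.transpose_mul, hCtrans]
    have : C f * X * (Xᵀ * C f) = C f * C d * C f := by
      rw [← Matrix.mul_assoc, Matrix.mul_assoc (C f), ← hKdef, hCK]
    rw [this, hCmul, hCmul, hCtrace]
    exact Finset.sum_congr rfl fun i _ => by ring
  refine ⟨?_, ?_, ?_, ?_⟩
  · have : Matrix.trace (ridgeHat X τ) = ∑ i, (d i + τ)⁻¹ * d i := by
      rw [hP τ hτ, hCtrace]
    rw [this]
    have hn' : (n : ℝ) = ∑ _i : Fin n, (1:ℝ) := by simp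
    rw [hn', ← Finset.sum_sub_distrib]
    exact Finset.sum_congr rfl fun i _ => by field_simp [hdτ i]; ring
  · rw [h1P, hFrobX]
  · rw [h1P, hFrob]
  · rw [hP τ hτ, hFrob]
    exact Finset.sum_congr rfl fun i _ => by ring

theorem stmt1
    (n q : ℕ) (hn : 0 < n) (hq : 0 < q)
    (X : Matrix (Fin n) (Fin q) ℝ) (hX : X ≠ 0)
    {Ω : Type*} [MeasurableSpace Ω] (P : Measure Ω) [IsProbabilityMeasure P]
    (σπ2 : ℝ) (hσπ : 0 < σπ2) (σξ2 : ℝ≥0) (hσξ : 0 < σξ2)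
    (π : Ω → Fin q → ℝ) (hπmeas : ∀ i, Measurable fun ω => π ω i)
    (hπindep : iIndepFun (fun i ω => π ω i) P)
    (hπid : ∀ i j, Measure.map (fun ω => π ω i) P = Measure.map (fun ω => π ω j) P)
    (hπsq : ∀ i, Integrable (fun ω => (π ω i) ^ 2) P)
    (hπmean : ∀ i, ∫ ω, π ω i ∂P = 0)
    (hπvar : ∀ i, ∫ ω, (π ω i) ^ 2 ∂P = σπ2)
    (ξ : Ω → Fin n → ℝ) (hξmeas : ∀ i, Measurable fun ω => ξ ω i)
    (hξindep : iIndepFun (fun i ω => ξ ω i) P)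
    (hξlaw : ∀ i, Measure.map (fun ω => ξ ω i) P = gaussianReal 0 σξ2)
    (hπξ : IndepFun π ξ P)
    :
    (∀ τ : ℝ, 0 < τ →
        ∫ ω, gcv X ((σξ2 : ℝ) / σπ2) (X *ᵥ π ω + ξ ω) ∂P ≤
          ∫ ω, gcv X τ (X *ᵥ π ω + ξ ω) ∂P) ∧
      (∀ τ : ℝ, 0 < τ →
        (∫ ω, predRisk X ((σξ2 : ℝ) / σπ2) (X *ᵥ π ω) (X *ᵥ π ω + ξ ω) ∂P ≤
            ∫ ω, predRisk X τ (X *ᵥ π ω) (X *ᵥ π ω + ξ ω) ∂P) ∧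
          (∫ ω, predRisk X τ (X *ᵥ π ω) (X *ᵥ π ω + ξ ω) ∂P =
              ∫ ω, predRisk X ((σξ2 : ℝ) / σπ2) (X *ᵥ π ω) (X *ᵥ π ω + ξ ω) ∂P →
            τ = (σξ2 : ℝ) / σπ2)) := by
  have hσξ' : (0:ℝ) < (σξ2:ℝ) := by exact_mod_cast hσξ
  set τs : ℝ := (σξ2:ℝ) / σπ2 with hτsdef
  have hτs : 0 < τs := div_pos hσξ' hσπ
  have hξσ : (σξ2:ℝ) = σπ2 * τs := by rw [hτsdef]; field_simp
  obtain ⟨d, hd, hdsum, hprop⟩ := my_ridge_diag X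
  have hXpos : 0 < ∑ i, ∑ j, X i j ^ 2 := by
    have hX' : ∃ i j, X i j ≠ 0 := by
      by_contra h
      push_neg at h
      exact hX (Matrix.ext fun i j => by rw [h i j, Matrix.zero_apply])
    obtain ⟨i0, j0, h0⟩ := hX'
    refine Finset.sum_pos' (fun i _ => Finset.sum_nonneg fun j _ => sq_nonneg _)
      ⟨i0, Finset.mem_univ _, Finset.sum_pos' (fun j _ => sq_nonneg _)
        ⟨j0, Finset.mem_univ _, pow_two_pos_of_ne_zero h0⟩⟩
  have hdpos : ∃ i, 0 < d i := by
    by_contra h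
    push_neg at h
    have h1 : ∑ i, d i ≤ 0 := Finset.sum_nonpos fun i _ => h i
    rw [hdsum] at h1
    linarith
  have hM := my_second_moment P σπ2 σξ2 hσξ.ne' π hπmeas hπindep hπsq hπmean hπvar
    ξ hξmeas hξindep hξlaw hπξ
  have hEG : ∀ τ : ℝ, 0 < τ →
      ∫ ω, gcv X τ (X *ᵥ π ω + ξ ω) ∂P
        = (σπ2 * ∑ i, d i * (τ * (d i + τ)⁻¹) ^ 2 + (σπ2 * τs) * ∑ i, (τ * (d i + τ)⁻¹) ^ 2)
          / (∑ i, τ * (d i + τ)⁻¹) ^ 2 := by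
    intro τ hτ
    obtain ⟨htr, hfA, hfB, hfP⟩ := hprop τ hτ
    set A : Matrix (Fin n) (Fin q) ℝ := (1 - ridgeHat X τ) * X with hAdef
    set B : Matrix (Fin n) (Fin n) ℝ := 1 - ridgeHat X τ with hBdef
    have hpt : ∀ ω, gcv X τ (X *ᵥ π ω + ξ ω)
        = (∑ i, ((A *ᵥ π ω + B *ᵥ ξ ω) i) ^ 2) / (∑ i, τ * (d i + τ)⁻¹) ^ 2 := by
      intro ω
      have hv : (1 - ridgeHat X τ) *ᵥ (X *ᵥ π ω + ξ ω) = A *ᵥ π ω + B *ᵥ ξ ω := by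
        rw [hAdef, hBdef, Matrix.mulVec_add, Matrix.mulVec_mulVec]
      simp only [gcv]
      rw [hv, htr]
    calc ∫ ω, gcv X τ (X *ᵥ π ω + ξ ω) ∂P
        = ∫ ω, (∑ i, ((A *ᵥ π ω + B *ᵥ ξ ω) i) ^ 2) / (∑ i, τ * (d i + τ)⁻¹) ^ 2 ∂P :=
          integral_congr_ae (Filter.Eventually.of_forall hpt)
      _ = (∫ ω, ∑ i, ((A *ᵥ π ω + B *ᵥ ξ ω) i) ^ 2 ∂P) / (∑ i, τ * (d i + τ)⁻¹) ^ 2 :=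
          integral_div _ _
      _ = (σπ2 * ∑ i, d i * (τ * (d i + τ)⁻¹) ^ 2 + (σπ2 * τs) * ∑ i, (τ * (d i + τ)⁻¹) ^ 2)
            / (∑ i, τ * (d i + τ)⁻¹) ^ 2 := by
          rw [hM A B, hAdef, hBdef, hfA, hfB, hξσ]
  have hET : ∀ τ : ℝ, 0 < τ →
      ∫ ω, predRisk X τ (X *ᵥ π ω) (X *ᵥ π ω + ξ ω) ∂P
        = σπ2 * ∑ i, d i * (τ * (d i + τ)⁻¹) ^ 2 + (σπ2 * τs) * ∑ i, (d i * (d i + τ)⁻¹) ^ 2 := by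
    intro τ hτ
    obtain ⟨htr, hfA, hfB, hfP⟩ := hprop τ hτ
    set A : Matrix (Fin n) (Fin q) ℝ := (1 - ridgeHat X τ) * X with hAdef
    set B2 : Matrix (Fin n) (Fin n) ℝ := - ridgeHat X τ with hB2def
    have hptv : ∀ ω, (X *ᵥ π ω) - (ridgeHat X τ *ᵥ (X *ᵥ π ω + ξ ω))
        = A *ᵥ π ω + B2 *ᵥ ξ ω := by
      intro ω
      rw [hAdef, hB2def, Matrix.mulVec_add, Matrix.sub_mul, Matrix.one_mul, Matrix.sub_mulVec,
        Matrix.mulVec_mulVec, Matrix.neg_mulVec]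
      abel
    have hpt : ∀ ω, predRisk X τ (X *ᵥ π ω) (X *ᵥ π ω + ξ ω)
        = ∑ i, ((A *ᵥ π ω + B2 *ᵥ ξ ω) i) ^ 2 := by
      intro ω
      simp only [predRisk]
      rw [hptv ω]
    have hfB2 : ∑ i, ∑ j, (- ridgeHat X τ : Matrix (Fin n) (Fin n) ℝ) i j ^ 2
        = ∑ i, (d i * (d i + τ)⁻¹) ^ 2 := by
      simp only [Matrix.neg_apply, neg_sq]
      exact hfP
    calc ∫ ω, predRisk X τ (X *ᵥ π ω) (X *ᵥ π ω + ξ ω) ∂P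
        = ∫ ω, ∑ i, ((A *ᵥ π ω + B2 *ᵥ ξ ω) i) ^ 2 ∂P :=
          integral_congr_ae (Filter.Eventually.of_forall hpt)
      _ = σπ2 * ∑ i, d i * (τ * (d i + τ)⁻¹) ^ 2 + (σπ2 * τs) * ∑ i, (d i * (d i + τ)⁻¹) ^ 2 := by
          rw [hM A B2, hAdef, hB2def, hfA, hfB2, hξσ]
  refine ⟨fun τ hτ => ?_, fun τ hτ => ⟨?_, fun heq => ?_⟩⟩
  · rw [hEG τ hτ, hEG τs hτs]
    exact my_scalar_G hn d hd σπ2 hσπ hτ hτs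
  · rw [hET τ hτ, hET τs hτs]
    exact (my_scalar_T d hd hdpos σπ2 hσπ hτ hτs).1
  · rw [hET τ hτ, hET τs hτs] at heq
    exact (my_scalar_T d hd hdpos σπ2 hσπ hτ hτs).2 heq
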